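/- arXiv:1508.07766 — 3 statements merged into one kernel-verified Lean document; each statement's English description precedes it below -/
import Mathlib

section
/- Let n ≥ 2 and let k : X × X → ℂ be a function on a set X, and let x₁, …, xₙ ∈ X be points such that k(x_j, x_i) = 0 whenever 1 ≤ i ≤ j ≤ n and j − i ≤ n − 2 (in particular k(x_i,x_i) = 0), and such that for every m with 2 ≤ m < n there is no m-tuple of pairwise distinct points among x₁,…,xₙ whose cyclic product of k-values is non-zero. Then the sum over all n-tuples (i₁,…,iₙ) ∈ {1,…,n}ⁿ of k(x_{i₁},x_{i₂}) k(x_{i₂},x_{i₃}) ⋯ k(x_{i_{n-1}},x_{iₙ}) k(x_{iₙ},x_{i₁}) equals n · k(x₁,x₂) k(x₂,x₃) ⋯ k(x_{n-1},xₙ) k(xₙ,x₁). -/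
theorem stmt_5 {X : Type*} (n : ℕ) (hn : 2 ≤ n) (k : X → X → ℂ) (x : Fin n → X)
    (h1 : ∀ i j : Fin n, i ≤ j → (j : ℕ) - (i : ℕ) ≤ n - 2 → k (x j) (x i) = 0)
    (h2 : ∀ m : ℕ, 2 ≤ m → m < n → ∀ y : Fin m → X,
      (∀ a : Fin m, ∃ b : Fin n, y a = x b) → Function.Injective y →
      ∏ a : Fin m, k (y a) (y (finRotate m a)) = 0) :
    ∑ i : Fin n → Fin n, ∏ j : Fin n, k (x (i j)) (x (i (finRotate n j)))
      = n * ∏ j : Fin n, k (x j) (x (finRotate n j)) := by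
  classical
  obtain ⟨n', rfl⟩ : ∃ n', n = n' + 1 := ⟨n - 1, by omega⟩
  have hrot : ∀ j : Fin (n'+1), finRotate (n'+1) j = j + 1 := finRotate_succ_apply
  -- the key lemma : non-rotations contribute zero
  open Fin.NatCast Fin.CommRing in
  have key : ∀ i : Fin (n'+1) → Fin (n'+1),
      (∀ c : Fin (n'+1), (fun j => j + c) ≠ i) →
      ∏ j, k (x (i j)) (x (i (finRotate (n'+1) j))) = 0 := by
    intro i hi
    by_contra hP
    have hfac : ∀ j, k (x (i j)) (x (i (j+1))) ≠ 0 := by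
      intro j
      have := Finset.prod_ne_zero_iff.mp hP j (Finset.mem_univ j)
      rwa [hrot] at this
    have step : ∀ j, (i j : ℕ) < i (j+1) ∨ ((i j : ℕ) = n' ∧ (i (j+1) : ℕ) = 0) := by
      intro j
      by_contra hc
      push_neg at hc
      refine hfac j (h1 (i (j+1)) (i j) ?_ ?_)
      · rw [Fin.le_def]; omega
      · have ha := (i j).isLt
        have hb := (i (j+1)).isLt
        omega
    obtain ⟨j₀, hj₀⟩ := Finite.exists_max fun j => (i j : ℕ)
    have hw : (i j₀ : ℕ) = n' ∧ (i (j₀+1) : ℕ) = 0 := by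
      rcases step j₀ with h | h
      · exact absurd h (not_lt.mpr (hj₀ (j₀+1)))
      · exact h
    set g : ℕ → ℕ := fun t => (i (j₀ + 1 + (t : Fin (n'+1))) : ℕ) with hg
    have hg0 : g 0 = 0 := by
      simp only [hg, Nat.cast_zero, add_zero]
      exact hw.2
    have hgn : ∀ t, g t < n' + 1 := fun t => (i _).isLt
    have hgstep : ∀ t, g t < g (t+1) ∨ (g t = n' ∧ g (t+1) = 0) := by
      intro t
      have e : ((t+1 : ℕ) : Fin (n'+1)) = (t : Fin (n'+1)) + 1 := by push_cast; ring
      have := step (j₀ + 1 + (t : Fin (n'+1)))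
      simpa only [hg, e, add_assoc] using this
    have hglast : g n' = n' := by
      have e : j₀ + 1 + ((n' : ℕ) : Fin (n'+1)) = j₀ := by
        have : (1 : Fin (n'+1)) + ((n' : ℕ) : Fin (n'+1)) = 0 := by
          have : ((n' + 1 : ℕ) : Fin (n'+1)) = 0 := by
            simp
          push_cast at this ⊢
          linear_combination this
        rw [add_assoc, this, add_zero]
      simp only [hg, e]
      exact hw.1
    have hex : ∃ t, g t = n' := ⟨n', hglast⟩
    set m := Nat.find hex with hm
    have hgm : g m = n' := Nat.find_spec hex
    have hmlt : ∀ t, t < m → g t ≠ n' := fun t ht => Nat.find_min hex ht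
    have hm_le : m ≤ n' := Nat.find_min' hex hglast
    have hm_pos : 0 < m := by
      rcases Nat.eq_zero_or_pos m with h | h
      · exfalso; rw [h] at hgm; rw [hg0] at hgm; omega
      · exact h
    have mono : ∀ t, t ≤ m → ∀ s, s ≤ t → g s + (t - s) ≤ g t := by
      intro t
      induction t with
      | zero => intro _ s hs; simp [Nat.le_zero.mp hs]
      | succ t ih =>
        intro ht s hs
        rcases Nat.lt_or_ge s (t+1) with h | h
        · have hst : g t < g (t+1) := by
            rcases hgstep t with h' | h'
            · exact h'
            · exact absurd h'.1 (hmlt t (by omega))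
          have := ih (by omega) s (by omega)
          omega
        · have : s = t+1 := by omega
          simp [this]
    rcases eq_or_lt_of_le hm_le with hcase | hcase
    · -- m = n' : i is a rotation, contradiction with hi
      refine hi (-(j₀+1)) ?_
      funext j
      set t : Fin (n'+1) := j - (j₀ + 1) with htdef
      have hjt : j₀ + 1 + t = j := by rw [htdef]; ring
      have htn : ((t : ℕ) : Fin (n'+1)) = t := Fin.cast_val_eq_self t
      have htm : (t : ℕ) ≤ m := by rw [hcase]; omega
      have hgt : g (t : ℕ) = (t : ℕ) := by
        have l1 := mono (t : ℕ) htm 0 (Nat.zero_le _)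
        have l2 := mono m le_rfl (t : ℕ) htm
        rw [hg0] at l1
        rw [hgm] at l2
        omega
      have hval : (i j : ℕ) = (t : ℕ) := by
        rw [← hjt]
        simpa only [hg, htn] using hgt
      have : i j = t := Fin.ext hval
      rw [htdef] at this
      rw [this]
      ring
    · -- m < n' : use h2 to get a contradiction
      set y : Fin (m+1) → X := fun t => x ⟨g t.val, hgn _⟩ with hy
      have hmem : ∀ a : Fin (m+1), ∃ b : Fin (n'+1), y a = x b := fun a => ⟨_, rfl⟩
      -- position map
      have hpos : ∀ t : ℕ, t < m →
          k (x ⟨g t, hgn t⟩) (x ⟨g (t+1), hgn (t+1)⟩) ≠ 0 := by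
        intro t ht
        have e1 : i (j₀ + 1 + (t : Fin (n'+1))) = ⟨g t, hgn t⟩ := Fin.ext rfl
        have e2 : i (j₀ + 1 + (t : Fin (n'+1)) + 1) = ⟨g (t+1), hgn (t+1)⟩ := by
          apply Fin.ext
          show (i (j₀ + 1 + (t : Fin (n'+1)) + 1) : ℕ) = g (t+1)
          have e : ((t+1 : ℕ) : Fin (n'+1)) = (t : Fin (n'+1)) + 1 := by push_cast; ring
          simp only [hg, e, add_assoc]
        have := hfac (j₀ + 1 + (t : Fin (n'+1)))
        rwa [e1, e2] at this
      have hcol : ∀ s t : Fin (m+1), (s : ℕ) < (t : ℕ) → y s = y t → False := by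
        intro s t hlt hst
        have hst1 : (s : ℕ) + 1 ≤ (t : ℕ) := hlt
        have htm : (t : ℕ) ≤ m := by omega
        have l1 := mono (t : ℕ) htm ((s : ℕ)+1) hst1
        have l2 := mono ((s : ℕ)+1) (by omega) 0 (Nat.zero_le _)
        rw [hg0] at l2
        have hzero : k (x ⟨g (t : ℕ), hgn _⟩) (x ⟨g ((s : ℕ)+1), hgn _⟩) = 0 := by
          refine h1 ⟨g ((s : ℕ)+1), hgn _⟩ ⟨g (t : ℕ), hgn _⟩ ?_ ?_
          · simp only [Fin.mk_le_mk]; omega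
          · show g (t : ℕ) - g ((s : ℕ)+1) ≤ n' + 1 - 2
            have := hgn (t : ℕ)
            omega
        have hy' : x ⟨g (s : ℕ), hgn _⟩ = x ⟨g (t : ℕ), hgn _⟩ := hst
        have := hpos (s : ℕ) (by omega)
        rw [hy', hzero] at this
        exact this rfl
      have hinj : Function.Injective y := by
        intro s t hst
        rcases lt_trichotomy (s : ℕ) (t : ℕ) with h | h | h
        · exact (hcol s t h hst).elim
        · exact Fin.ext h
        · exact (hcol t s h hst.symm).elim
      have h2' := h2 (m+1) (by omega) (by omega) y hmem hinj
      have hylast : ∀ t : Fin (m+1), k (y t) (y (finRotate (m+1) t)) ≠ 0 := by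
        intro t
        rw [finRotate_succ_apply]
        rcases Nat.lt_or_ge (t : ℕ) m with ht | ht
        · have hne : t ≠ Fin.last m := fun h => by simp [h] at ht
          have e : ((t + 1 : Fin (m+1)) : ℕ) = (t : ℕ) + 1 := by
            rw [Fin.val_add_one]
            simp [hne]
          have e' : y (t+1) = x ⟨g ((t : ℕ)+1), hgn _⟩ := by
            simp only [hy, e]
          rw [e']
          exact hpos (t : ℕ) ht
        · have htl : t = Fin.last m := by
            apply Fin.ext
            have := t.isLt
            simp only [Fin.val_last]
            omega
          have e1 : y t = x ⟨n', by omega⟩ := by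
            simp only [hy, htl, Fin.val_last]
            congr 1
            exact Fin.ext hgm
          have e2 : y (t + 1) = x ⟨0, by omega⟩ := by
            rw [htl, Fin.last_add_one]
            simp only [hy, Fin.val_zero]
            congr 1
            exact Fin.ext hg0
          rw [e1, e2]
          have ej0 : i j₀ = ⟨n', by omega⟩ := Fin.ext hw.1
          have ej1 : i (j₀ + 1) = ⟨0, by omega⟩ := Fin.ext hw.2
          have := hfac j₀
          rwa [ej0, ej1] at this
      exact absurd h2' (Finset.prod_ne_zero_iff.mpr (fun t _ => hylast t))
  -- value of each rotation term
  have rot_val : ∀ c : Fin (n'+1),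
      ∏ j, k (x (j + c)) (x (finRotate (n'+1) j + c))
        = ∏ j, k (x j) (x (finRotate (n'+1) j)) := by
    intro c
    simp only [hrot]
    have e1 : ∀ j : Fin (n'+1), k (x (j + c)) (x (j + 1 + c))
        = k (x (j + c)) (x ((j + c) + 1)) := by
      intro j; rw [add_right_comm]
    simp only [e1]
    exact Fintype.prod_equiv (Equiv.addRight c) _ _ (fun j => by simp)
  set S : Finset (Fin (n'+1) → Fin (n'+1)) :=
    Finset.univ.image (fun c => fun j => j + c) with hS
  have hzero : ∀ i ∈ (Finset.univ : Finset (Fin (n'+1) → Fin (n'+1))), i ∉ S →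
      ∏ j, k (x (i j)) (x (i (finRotate (n'+1) j))) = 0 := by
    intro i _ hiS
    apply key
    intro c hc
    exact hiS (Finset.mem_image.mpr ⟨c, Finset.mem_univ c, hc⟩)
  rw [← Finset.sum_subset (Finset.subset_univ S) hzero, hS]
  rw [Finset.sum_image (by
    intro c _ c' _ h
    have := congrFun h 0
    simpa using this)]
  simp only [rot_val]
  rw [Finset.sum_const, Finset.card_univ, Fintype.card_fin, nsmul_eq_mul]
end

section
/- Let λ₁, λ₂, λ₃, … be a (finite or infinite) sequence of complex numbers with Σ |λ_j| < ∞ such that Σ λ_jⁿ = 0 for every positive integer n. Then λ_j = 0 for all j. -/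
open Filter Finset

theorem stmt_8 (l : ℕ → ℂ) (hsum : Summable fun j => ‖l j‖)
    (h : ∀ n : ℕ, 1 ≤ n → ∑' j, (l j) ^ n = 0) :
    ∀ j, l j = 0 := by
  intro j0
  by_contra hj0
  -- level sets are finite
  have hfin : ∀ ε : ℝ, 0 < ε → {j : ℕ | ε ≤ ‖l j‖}.Finite := by
    intro ε hε
    have ht : Tendsto l cofinite (nhds 0) :=
      (Summable.of_norm hsum : Summable l).tendsto_cofinite_zero
    have hmem : l ⁻¹' Metric.ball 0 ε ∈ cofinite := ht (Metric.ball_mem_nhds 0 hε)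
    rw [Filter.mem_cofinite] at hmem
    refine hmem.subset ?_
    intro j hj
    simp only [Set.mem_compl_iff, Set.mem_preimage, Metric.mem_ball, dist_zero_right, not_lt]
    exact hj
  have hj0' : (0:ℝ) < ‖l j0‖ := norm_pos_iff.mpr hj0
  obtain ⟨j1, hj1mem, hj1max⟩ := Set.exists_max_image {j | ‖l j0‖ ≤ ‖l j‖}
    (fun j => ‖l j‖) (hfin _ hj0') ⟨j0, show ‖l j0‖ ≤ ‖l j0‖ from le_rfl⟩
  have hmax : ∀ j, ‖l j‖ ≤ ‖l j1‖ := by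
    intro j
    rcases le_or_gt (‖l j0‖) (‖l j‖) with hc | hc
    · exact hj1max j hc
    · exact hc.le.trans hj1mem
  set r := ‖l j1‖ with hrdef
  have hr : 0 < r := lt_of_lt_of_le hj0' hj1mem
  have hl1 : l j1 ≠ 0 := by
    intro hc; rw [hrdef, hc, norm_zero] at hr; exact lt_irrefl 0 hr
  set u : ℕ → ℂ := fun j => l j / l j1 with hu
  have hun : ∀ j, ‖u j‖ ≤ 1 := by
    intro j
    rw [hu]
    simp only [norm_div]
    exact div_le_one_of_le₀ (hmax j) (norm_nonneg _)
  have huj1 : u j1 = 1 := by rw [hu]; exact div_self hl1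
  have husum : Summable fun j => ‖u j‖ := by
    simp only [hu, norm_div]
    exact hsum.div_const r
  -- each power sum of u vanishes
  have hupow : ∀ n : ℕ, 1 ≤ n → Summable (fun j => u j ^ n) := by
    intro n hn
    apply Summable.of_norm_bounded husum
    intro j
    rw [norm_pow]
    exact pow_le_of_le_one (norm_nonneg _) (hun j) (by omega)
  have huzero : ∀ n : ℕ, 1 ≤ n → ∑' j, u j ^ n = 0 := by
    intro n hn
    have hc : ∀ j, u j ^ n = (l j1 ^ n)⁻¹ * l j ^ n := by
      intro j; rw [hu]; rw [div_pow, div_eq_inv_mul]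
    rw [tsum_congr hc, tsum_mul_left, h n hn, mul_zero]
  -- finite sets
  have hBfin : {j | l j = l j1}.Finite := by
    refine (hfin r hr).subset ?_
    intro j hj
    simp only [Set.mem_setOf_eq] at hj ⊢
    rw [hj]
  have hFfin : {j : ℕ | r/2 ≤ ‖l j‖}.Finite := hfin _ (by positivity)
  set Bs := hBfin.toFinset with hBs
  set Fs := hFfin.toFinset with hFs
  have hBF : Bs ⊆ Fs := by
    intro j hj
    rw [hBs, Set.Finite.mem_toFinset] at hj
    rw [hFs, Set.Finite.mem_toFinset]
    simp only [Set.mem_setOf_eq] at hj ⊢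
    rw [hj]; linarith
  have hj1B : j1 ∈ Bs := by rw [hBs, Set.Finite.mem_toFinset]; exact rfl
  -- the partial sums
  set fN : ℕ → ℕ → ℂ := fun N j => ∑ n ∈ Finset.Icc 1 N, u j ^ n with hfN
  have hfNsum : ∀ N, Summable (fN N) := by
    intro N
    exact summable_sum (fun n hn => hupow n (Finset.mem_Icc.mp hn).1)
  have hzero : ∀ N, ∑' j, fN N j = 0 := by
    intro N
    rw [hfN]
    rw [Summable.tsum_finsetSum (fun n hn => hupow n (Finset.mem_Icc.mp hn).1)]
    apply Finset.sum_eq_zero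
    intro n hn
    exact huzero n (Finset.mem_Icc.mp hn).1
  -- bound on the tail (j ∉ Fs)
  have htailptbound : ∀ N, ∀ j : ℕ, j ∉ (Fs : Set ℕ) → ‖fN N j‖ ≤ 2 * ‖u j‖ := by
    intro N j hj
    have hsmall : ‖u j‖ ≤ 1/2 := by
      rw [hFs] at hj
      simp only [Finset.coe_sort_coe, Set.Finite.coe_toFinset, Set.mem_setOf_eq, not_le] at hj
      rw [hu]
      simp only [norm_div]
      rw [div_le_div_iff₀ (by exact hr) (by norm_num)]  -- maybe wrong; fix below
      linarith
    calc ‖fN N j‖ ≤ ∑ n ∈ Finset.Icc 1 N, ‖u j ^ n‖ := norm_sum_le _ _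
      _ ≤ ∑ n ∈ Finset.Icc 1 N, ‖u j‖ * (1/2)^(n-1) := by
          apply Finset.sum_le_sum
          intro n hn
          rw [norm_pow]
          obtain ⟨h1, _⟩ := Finset.mem_Icc.mp hn
          calc ‖u j‖ ^ n = ‖u j‖ * ‖u j‖^(n-1) := by
                rw [← pow_succ']
                congr 1
                omega
            _ ≤ ‖u j‖ * (1/2)^(n-1) := by
                apply mul_le_mul_of_nonneg_left _ (norm_nonneg _)
                exact pow_le_pow_left₀ (norm_nonneg _) hsmall _
      _ = ‖u j‖ * ∑ n ∈ Finset.Icc 1 N, (1/2:ℝ)^(n-1) := by rw [Finset.mul_sum]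
      _ ≤ ‖u j‖ * 2 := by
          apply mul_le_mul_of_nonneg_left _ (norm_nonneg _)
          have : ∑ n ∈ Finset.Icc 1 N, (1/2:ℝ)^(n-1) = ∑ i ∈ Finset.range N, (1/2:ℝ)^i := by
            apply Finset.sum_nbij' (fun n => n - 1) (fun i => i + 1) <;>
              (intro a ha; simp only [Finset.mem_Icc, Finset.mem_range] at * <;> omega)
          rw [this]
          exact sum_geometric_two_le N
      _ = 2 * ‖u j‖ := mul_comm _ _
  -- tail bound
  set C : ℝ := 2 * ∑' j, ‖u j‖ with hC
  have htail : ∀ N, ‖∑' (x : ↑((Fs : Set ℕ)ᶜ)), fN N x‖ ≤ C := by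
    intro N
    have hs1 : Summable (fun x : ↑((Fs : Set ℕ)ᶜ) => ‖fN N x‖) := by
      have : Summable (fun j => ‖fN N j‖) := summable_norm_iff.mpr (hfNsum N)
      exact this.subtype _
    have hs2 : Summable (fun x : ↑((Fs : Set ℕ)ᶜ) => 2 * ‖u x‖) := by
      exact (husum.subtype _).mul_left 2
    calc ‖∑' (x : ↑((Fs : Set ℕ)ᶜ)), fN N x‖ ≤ ∑' (x : ↑((Fs : Set ℕ)ᶜ)), ‖fN N x‖ :=
          norm_tsum_le_tsum_norm hs1
      _ ≤ ∑' (x : ↑((Fs : Set ℕ)ᶜ)), 2 * ‖u x‖ := by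
          apply Summable.tsum_le_tsum _ hs1 hs2
          intro x
          exact htailptbound N x x.2
      _ = 2 * ∑' (x : ↑((Fs : Set ℕ)ᶜ)), ‖u x‖ := tsum_mul_left
      _ ≤ C := by
          rw [hC]
          apply mul_le_mul_of_nonneg_left _ (by norm_num)
          exact Summable.tsum_subtype_le (fun j => ‖u j‖) _ (fun j => norm_nonneg _) husum
  -- middle bound
  set D : ℝ := ∑ j ∈ Fs \ Bs, 2 / ‖u j - 1‖ with hD
  have hmid : ∀ N, ‖∑ j ∈ Fs \ Bs, fN N j‖ ≤ D := by
    intro N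
    refine (norm_sum_le _ _).trans (Finset.sum_le_sum ?_)
    intro j hj
    have hjne : u j ≠ 1 := by
      intro hc
      rw [hu] at hc
      have hlj : l j = l j1 := (div_eq_one_iff_eq hl1).mp hc
      have : j ∈ Bs := by rw [hBs, Set.Finite.mem_toFinset]; exact hlj
      exact (Finset.mem_sdiff.mp hj).2 this
    have hden : (0:ℝ) < ‖u j - 1‖ := norm_pos_iff.mpr (sub_ne_zero.mpr hjne)
    have hform : fN N j = (u j ^ (N+1) - u j) / (u j - 1) := by
      rw [hfN]
      simp only
      rw [← Finset.Ico_add_one_right_eq_Icc, geom_sum_Ico hjne (by omega), pow_one]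
    rw [hform, norm_div]
    gcongr
    calc ‖u j ^ (N+1) - u j‖ ≤ ‖u j ^ (N+1)‖ + ‖u j‖ := norm_sub_le _ _
      _ ≤ 1 + 1 := add_le_add (by rw [norm_pow]; exact pow_le_one₀ (norm_nonneg _) (hun j)) (hun j)
      _ = 2 := by norm_num
  -- assemble: for every N, (Bs.card) * N is bounded
  have hB1 : 1 ≤ Bs.card := Finset.card_pos.mpr ⟨j1, hj1B⟩
  have hkey : ∀ N : ℕ, (Bs.card : ℝ) * N ≤ D + C := by
    intro N
    have hsplit := Summable.sum_add_tsum_compl (s := Fs) (hfNsum N)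
    rw [hzero N] at hsplit
    have hFsum : ∑ j ∈ Fs, fN N j = ∑ j ∈ Fs \ Bs, fN N j + ∑ j ∈ Bs, fN N j :=
      (Finset.sum_sdiff hBF).symm
    have hBsum : ∑ j ∈ Bs, fN N j = (Bs.card : ℂ) * N := by
      have heach : ∀ j ∈ Bs, fN N j = (N : ℂ) := by
        intro j hj
        rw [hBs, Set.Finite.mem_toFinset] at hj
        simp only [Set.mem_setOf_eq] at hj
        have huj : u j = 1 := by show l j / l j1 = 1; rw [hj]; exact div_self hl1
        rw [hfN]
        simp only [huj, one_pow, Finset.sum_const, Nat.Icc_eq_range', smul_eq_mul, mul_one]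
        simp [Nat.card_Icc]
      rw [Finset.sum_congr rfl heach, Finset.sum_const, nsmul_eq_mul]
    have heq : (Bs.card : ℂ) * N = -(∑ j ∈ Fs \ Bs, fN N j + ∑' (x : ↑((Fs : Set ℕ)ᶜ)), fN N x) := by
      rw [← hBsum]
      have := hsplit
      rw [hFsum] at this
      linear_combination this
    have hnorm : (Bs.card : ℝ) * N = ‖(Bs.card : ℂ) * (N : ℂ)‖ := by
      rw [norm_mul, Complex.norm_natCast, Complex.norm_natCast]
    rw [hnorm, heq, norm_neg]
    calc ‖∑ j ∈ Fs \ Bs, fN N j + ∑' (x : ↑((Fs : Set ℕ)ᶜ)), fN N x‖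
        ≤ ‖∑ j ∈ Fs \ Bs, fN N j‖ + ‖∑' (x : ↑((Fs : Set ℕ)ᶜ)), fN N x‖ := norm_add_le _ _
      _ ≤ D + C := add_le_add (hmid N) (htail N)
  -- contradiction
  set N := ⌈D + C⌉₊ + 1 with hN
  have h1 := hkey N
  have h2 : (N : ℝ) ≤ (Bs.card : ℝ) * N := by
    have : (1:ℝ) ≤ (Bs.card : ℝ) := by exact_mod_cast hB1
    nlinarith [Nat.cast_nonneg (α := ℝ) N]
  have h3 : D + C < N := by
    rw [hN]
    push_cast
    calc D + C ≤ ⌈D + C⌉₊ := Nat.le_ceil _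
      _ < ⌈D + C⌉₊ + 1 := by linarith
  linarith
end

section
/- Let A be an N × N complex matrix such that for every subset S ⊆ {1, …, N} the compression A_S (the submatrix of A with rows and columns indexed by S), viewed as an operator on ℂ^S, is nilpotent. Then every cyclic product A_{i₁ i₂} A_{i₂ i₃} ⋯ A_{iₙ i₁} over pairwise distinct indices i₁, …, iₙ vanishes. -/
open scoped Fin.CommRing in
theorem stmt_13 (N : ℕ) (A : Matrix (Fin N) (Fin N) ℂ)
    (h : ∀ S : Finset (Fin N),
      IsNilpotent (A.submatrix (fun i : S => (i : Fin N)) (fun i : S => (i : Fin N)))) :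
    ∀ n : ℕ, 1 ≤ n → ∀ i : Fin n → Fin N, Function.Injective i →
      ∏ j : Fin n, A (i j) (i (finRotate n j)) = 0 := by
  intro n
  induction n using Nat.strong_induction_on with
  | _ n IH =>
    intro hn i hi
    by_contra hP
    obtain ⟨n', rfl⟩ : ∃ n', n = n' + 1 := ⟨n - 1, by omega⟩
    -- each edge of the cycle is nonzero
    have hedge : ∀ t : Fin (n' + 1), A (i t) (i (t + 1)) ≠ 0 := by
      intro t ht
      exact hP (Finset.prod_eq_zero (Finset.mem_univ t)
        (by rw [finRotate_succ_apply]; exact ht))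
    -- key step: all other entries of the compression vanish
    have key : ∀ k l : Fin (n' + 1), l ≠ k + 1 → A (i k) (i l) = 0 := by
      intro k l hkl
      by_contra h0
      set d : Fin (n' + 1) := k - l with hd
      have hd_lt : d.val < n' := by
        rcases Nat.lt_or_ge d.val n' with hlt | hge
        · exact hlt
        exfalso
        have hdval : d = Fin.last n' := Fin.ext (le_antisymm (Nat.lt_succ_iff.mp d.isLt) hge)
        apply hkl
        have hk : k = d + l := by rw [hd]; abel
        calc l = l + (Fin.last n' + 1) := by rw [Fin.last_add_one, add_zero]
          _ = (d + l) + 1 := by rw [hdval]; ring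
          _ = k + 1 := by rw [← hk]
      have hmle : d.val + 1 ≤ n' + 1 := by omega
      set ι : Fin (d.val + 1) → Fin (n' + 1) := fun j => l + Fin.castLE hmle j with hι
      have hιinj : Function.Injective ι := fun a b hab => by
        have := add_left_cancel hab
        exact Fin.castLE_injective hmle this
      have hzero := IH (d.val + 1) (by omega) (by omega) (fun j => i (ι j)) (hi.comp hιinj)
      rw [Finset.prod_eq_zero_iff] at hzero
      obtain ⟨j, -, hj⟩ := hzero
      rw [finRotate_succ_apply] at hj
      change A (i (ι j)) (i (ι (j + 1))) = 0 at hj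
      rcases Nat.lt_or_ge (j.val + 1) (d.val + 1) with hjlt | hjge
      · -- interior edge of the cycle
        have hjlast : j < Fin.last d.val := by
          rw [Fin.lt_def, Fin.val_last]; omega
        have hv : ((j + 1 : Fin (d.val + 1))).val = j.val + 1 :=
          Fin.val_add_one_of_lt hjlast
        have hclast : Fin.castLE hmle j < Fin.last n' := by
          rw [Fin.lt_def, Fin.val_last, Fin.coe_castLE]; omega
        have hcast : Fin.castLE hmle (j + 1) = Fin.castLE hmle j + 1 := by
          apply Fin.ext
          rw [Fin.coe_castLE, hv, Fin.val_add_one_of_lt hclast, Fin.coe_castLE]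
        have h1 : ι (j + 1) = ι j + 1 := by
          show l + Fin.castLE hmle (j + 1) = (l + Fin.castLE hmle j) + 1
          rw [hcast]; ring
        rw [h1] at hj
        exact hedge (ι j) hj
      · -- the closing edge
        have hjval : j.val = d.val := by
          have := j.isLt; omega
        have hj1 : (j + 1 : Fin (d.val + 1)) = 0 := by
          rw [show j = Fin.last d.val from Fin.ext (by simpa using hjval)]
          exact Fin.last_add_one _
        have hι0 : ι 0 = l := by
          show l + Fin.castLE hmle 0 = l
          simp
        have hιj : ι j = k := by
          show l + Fin.castLE hmle j = k
          have hc : Fin.castLE hmle j = d := Fin.ext (by simpa using hjval)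
          rw [hc, hd]; ring
        rw [hj1, hι0, hιj] at hj
        exact h0 hj
    -- compression to the image of i
    set S : Finset (Fin N) := Finset.image i Finset.univ with hS
    set M : Matrix S S ℂ :=
      A.submatrix (fun x : S => (x : Fin N)) (fun x : S => (x : Fin N)) with hM
    set e : Fin (n' + 1) → S :=
      fun t => ⟨i t, Finset.mem_image_of_mem i (Finset.mem_univ t)⟩ with he
    have hebij : Function.Bijective e := by
      constructor
      · intro a b hab
        exact hi (congrArg Subtype.val hab)
      · rintro ⟨s, hs⟩
        rw [hS] at hs
        obtain ⟨t, -, rfl⟩ := Finset.mem_image.mp hs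
        exact ⟨t, rfl⟩
    have claim : ∀ p : ℕ, (M ^ p) (e 0) (e (p : Fin (n' + 1))) ≠ 0 := by
      intro p
      induction p with
      | zero =>
        simp only [pow_zero, Nat.cast_zero]
        rw [Matrix.one_apply_eq]
        exact one_ne_zero
      | succ p ihp =>
        rw [pow_succ, Matrix.mul_apply]
        rw [← Fintype.sum_bijective e hebij
          (fun t => (M ^ p) (e 0) (e t) * M (e t) (e ((p + 1 : ℕ) : Fin (n' + 1))))
          (fun s => (M ^ p) (e 0) s * M s (e ((p + 1 : ℕ) : Fin (n' + 1)))) (fun t => rfl)]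
        rw [Finset.sum_eq_single_of_mem ((p : ℕ) : Fin (n' + 1)) (Finset.mem_univ _)]
        · have hcast : (((p + 1 : ℕ)) : Fin (n' + 1)) = ((p : ℕ) : Fin (n' + 1)) + 1 := by
            push_cast; ring
          have hMe : M (e ((p : ℕ) : Fin (n' + 1))) (e (((p + 1 : ℕ)) : Fin (n' + 1)))
              = A (i ((p : ℕ) : Fin (n' + 1))) (i (((p + 1 : ℕ)) : Fin (n' + 1))) := rfl
          rw [hMe]
          apply mul_ne_zero ihp
          rw [hcast]
          exact hedge _
        · intro t _ ht
          have hMe : M (e t) (e (((p + 1 : ℕ)) : Fin (n' + 1)))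
              = A (i t) (i (((p + 1 : ℕ)) : Fin (n' + 1))) := rfl
          rw [hMe, key t _ (by
            push_cast
            intro hcon
            exact ht (add_right_cancel hcon).symm), mul_zero]
    obtain ⟨m, hm⟩ := h S
    have hM0 : M ^ m = 0 := hm
    exact claim m (by rw [hM0]; simp)
end
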